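/- Under the hypotheses that X = ⋃_n a_n with each a_n a compact invariant arc with fixed endpoints, the map φ_n: H(X) → H⁺(a_n) × H_n given by φ_n(f) = (f|_{a_n}, f|_{X_n}), where X_n = cl(X \ a_n) and H_n = {f ∈ H(X_n) : f fixes p_n, q_n}, is a homeomorphism with respect to the C⁰ and product topologies. -/

import Mathlib

open Set Filter Topology

noncomputable section

/-- The `C⁰` distance on the homeomorphism group of a metric space. -/
def dC0H {α : Type*} [MetricSpace α] (f g : α ≃ₜ α) : ℝ :=
  ⨆ x : α, max (dist (f x) (g x)) (dist (f.symm x) (g.symm x))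

/-- A subset of the homeomorphism group is open for the `C⁰` distance. -/
def OpenC0H {α : Type*} [MetricSpace α] (U : Set (α ≃ₜ α)) : Prop :=
  ∀ f ∈ U, ∃ r : ℝ, 0 < r ∧ ∀ g : α ≃ₜ α, dC0H f g < r → g ∈ U

/-- A subset of the homeomorphism group is dense for the `C⁰` distance. -/
def DenseC0H {α : Type*} [MetricSpace α] (S : Set (α ≃ₜ α)) : Prop :=
  ∀ f : α ≃ₜ α, ∀ r : ℝ, 0 < r → ∃ g ∈ S, dC0H f g < r

/-- A subset of the homeomorphism group is a `G_δ` set for the `C⁰` topology. -/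
def GdeltaC0H {α : Type*} [MetricSpace α] (S : Set (α ≃ₜ α)) : Prop :=
  ∃ U : ℕ → Set (α ≃ₜ α), (∀ n, OpenC0H (U n)) ∧ S = ⋂ n, U n

/-- The conjugacy class of a homeomorphism `f`. -/
def ConjClassH {α : Type*} [MetricSpace α] (f : α ≃ₜ α) : Set (α ≃ₜ α) :=
  {g : α ≃ₜ α | ∃ h : α ≃ₜ α, ∀ x, g x = h (f (h.symm x))}

/-- Restriction of a self-homeomorphism to an invariant set. -/
def hrestrict {X : Type*} [TopologicalSpace X] (f : X ≃ₜ X) (s : Set X) (h : f '' s = s) :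
    s ≃ₜ s := (f.image s).trans (Homeomorph.setCongr h)

lemma hrestrict_coe {X : Type*} [TopologicalSpace X] (f : X ≃ₜ X) (s : Set X) (h : f '' s = s)
    (x : s) : (hrestrict f s h x : X) = f x := rfl

lemma hrestrict_symm_coe {X : Type*} [TopologicalSpace X] (f : X ≃ₜ X) (s : Set X)
    (h : f '' s = s) (x : s) : ((hrestrict f s h).symm x : X) = f.symm x := by
  apply f.injective
  rw [Homeomorph.apply_symm_apply]
  have h2 : (hrestrict f s h ((hrestrict f s h).symm x) : X)
      = f (((hrestrict f s h).symm x) : X) := rfl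
  rw [← h2, Homeomorph.apply_symm_apply]

lemma dC0H_term_bdd {α : Type*} [MetricSpace α] [CompactSpace α] (f g : α ≃ₜ α) :
    BddAbove (Set.range fun x : α => max (dist (f x) (g x)) (dist (f.symm x) (g.symm x))) := by
  refine ⟨Metric.diam (Set.univ : Set α), ?_⟩
  rintro r ⟨x, rfl⟩
  exact max_le (Metric.dist_le_diam_of_mem isCompact_univ.isBounded trivial trivial)
    (Metric.dist_le_diam_of_mem isCompact_univ.isBounded trivial trivial)

lemma dC0H_restrict_le {X : Type*} [MetricSpace X] [CompactSpace X]
    {s : Set X} [Nonempty s] (f g : X ≃ₜ X) (rf rg : s ≃ₜ s)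
    (hf : ∀ x : s, (rf x : X) = f x) (hf' : ∀ x : s, (rf.symm x : X) = f.symm x)
    (hg : ∀ x : s, (rg x : X) = g x) (hg' : ∀ x : s, (rg.symm x : X) = g.symm x) :
    dC0H rf rg ≤ dC0H f g := by
  refine ciSup_le fun x => ?_
  have h1 : max (dist (rf x) (rg x)) (dist (rf.symm x) (rg.symm x))
      = max (dist (f (x : X)) (g (x : X))) (dist (f.symm (x : X)) (g.symm (x : X))) := by
    rw [Subtype.dist_eq, Subtype.dist_eq, hf, hg, hf', hg']
  rw [h1]
  exact le_ciSup (dC0H_term_bdd f g) (x : X)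

lemma dC0H_le_max {X : Type*} [MetricSpace X] [Nonempty X]
    {A B : Set X} [Nonempty A] [Nonempty B] [CompactSpace A] [CompactSpace B]
    (hcov : ∀ x : X, x ∈ A ∨ x ∈ B) (f g : X ≃ₜ X)
    (rfA rgA : A ≃ₜ A) (rfB rgB : B ≃ₜ B)
    (hfA : ∀ x : A, (rfA x : X) = f x) (hfA' : ∀ x : A, (rfA.symm x : X) = f.symm x)
    (hgA : ∀ x : A, (rgA x : X) = g x) (hgA' : ∀ x : A, (rgA.symm x : X) = g.symm x)
    (hfB : ∀ x : B, (rfB x : X) = f x) (hfB' : ∀ x : B, (rfB.symm x : X) = f.symm x)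
    (hgB : ∀ x : B, (rgB x : X) = g x) (hgB' : ∀ x : B, (rgB.symm x : X) = g.symm x) :
    dC0H f g ≤ max (dC0H rfA rgA) (dC0H rfB rgB) := by
  refine ciSup_le fun x => ?_
  rcases hcov x with hx | hx
  · refine le_trans ?_ (le_max_left _ _)
    have h1 : max (dist (f x) (g x)) (dist (f.symm x) (g.symm x))
        = max (dist (rfA ⟨x, hx⟩) (rgA ⟨x, hx⟩)) (dist (rfA.symm ⟨x, hx⟩) (rgA.symm ⟨x, hx⟩)) := by
      rw [Subtype.dist_eq, Subtype.dist_eq, hfA, hgA, hfA', hgA']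
    rw [h1]
    exact le_ciSup (dC0H_term_bdd rfA rgA) ⟨x, hx⟩
  · refine le_trans ?_ (le_max_right _ _)
    have h1 : max (dist (f x) (g x)) (dist (f.symm x) (g.symm x))
        = max (dist (rfB ⟨x, hx⟩) (rgB ⟨x, hx⟩)) (dist (rfB.symm ⟨x, hx⟩) (rgB.symm ⟨x, hx⟩)) := by
      rw [Subtype.dist_eq, Subtype.dist_eq, hfB, hgB, hfB', hgB']
    rw [h1]
    exact le_ciSup (dC0H_term_bdd rfB rgB) ⟨x, hx⟩

lemma glue_homeo {X : Type*} [MetricSpace X] [CompactSpace X]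
    {A B : Set X} {p q : X} (hA : IsClosed A) (hBc : B = closure Aᶜ)
    (hp : p ∈ A) (hq : q ∈ A) (hpB : p ∈ B) (hqB : q ∈ B)
    (hABpq : A ∩ B ⊆ {p, q})
    (g : A ≃ₜ A) (h' : B ≃ₜ B)
    (hg1 : (g ⟨p, hp⟩ : X) = p) (hg2 : (g ⟨q, hq⟩ : X) = q)
    (hh1 : (h' ⟨p, hpB⟩ : X) = p) (hh2 : (h' ⟨q, hqB⟩ : X) = q) :
    ∃ F : X ≃ₜ X, (∀ x : A, F x = (g x : X)) ∧ (∀ x : B, F x = (h' x : X)) := by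
  classical
  have hBclosed : IsClosed B := hBc ▸ isClosed_closure
  have hAcB : Aᶜ ⊆ B := hBc ▸ subset_closure
  have hg1' : (g.symm ⟨p, hp⟩ : X) = p := by
    have h0 : g ⟨p, hp⟩ = ⟨p, hp⟩ := Subtype.ext hg1
    rw [← h0, Homeomorph.symm_apply_apply]
  have hg2' : (g.symm ⟨q, hq⟩ : X) = q := by
    have h0 : g ⟨q, hq⟩ = ⟨q, hq⟩ := Subtype.ext hg2
    rw [← h0, Homeomorph.symm_apply_apply]
  have hh1' : (h'.symm ⟨p, hpB⟩ : X) = p := by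
    have h0 : h' ⟨p, hpB⟩ = ⟨p, hpB⟩ := Subtype.ext hh1
    rw [← h0, Homeomorph.symm_apply_apply]
  have hh2' : (h'.symm ⟨q, hqB⟩ : X) = q := by
    have h0 : h' ⟨q, hqB⟩ = ⟨q, hqB⟩ := Subtype.ext hh2
    rw [← h0, Homeomorph.symm_apply_apply]
  have hpres : ∀ (k : B ≃ₜ B), (k ⟨p, hpB⟩ : X) = p → (k ⟨q, hqB⟩ : X) = q →
      ∀ y : B, (y : X) ∉ A → (k y : X) ∉ A := by
    intro k hk1 hk2 y hy hmem
    have hpq : (k y : X) ∈ ({p, q} : Set X) := hABpq ⟨hmem, (k y).2⟩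
    rcases hpq with e | e
    · have : k y = k ⟨p, hpB⟩ := Subtype.ext (by rw [hk1]; exact e)
      have := k.injective this
      exact hy (by rw [congrArg Subtype.val this]; exact hp)
    · have : k y = k ⟨q, hqB⟩ := Subtype.ext (by rw [hk2]; exact e)
      have := k.injective this
      exact hy (by rw [congrArg Subtype.val this]; exact hq)
  set gE : X → X := fun x => if hx : x ∈ A then (g ⟨x, hx⟩ : X) else x with hgE
  set hE : X → X := fun x => if hx : x ∈ B then (h' ⟨x, hx⟩ : X) else x with hhE
  set gE' : X → X := fun x => if hx : x ∈ A then (g.symm ⟨x, hx⟩ : X) else x with hgE'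
  set hE' : X → X := fun x => if hx : x ∈ B then (h'.symm ⟨x, hx⟩ : X) else x with hhE'
  set F : X → X := fun x => if x ∈ A then gE x else hE x with hF
  set G : X → X := fun x => if x ∈ A then gE' x else hE' x with hG
  have FA : ∀ (x : X) (hx : x ∈ A), F x = (g ⟨x, hx⟩ : X) := by
    intro x hx; simp only [hF, hgE, if_pos hx, dif_pos hx]
  have Fnot : ∀ (x : X) (hx : x ∉ A), F x = (h' ⟨x, hAcB hx⟩ : X) := by
    intro x hx; simp only [hF, hhE, if_neg hx, dif_pos (hAcB hx)]
  have GA : ∀ (x : X) (hx : x ∈ A), G x = (g.symm ⟨x, hx⟩ : X) := by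
    intro x hx; simp only [hG, hgE', if_pos hx, dif_pos hx]
  have Gnot : ∀ (x : X) (hx : x ∉ A), G x = (h'.symm ⟨x, hAcB hx⟩ : X) := by
    intro x hx; simp only [hG, hhE', if_neg hx, dif_pos (hAcB hx)]
  have hli : Function.LeftInverse G F := by
    intro x
    by_cases hx : x ∈ A
    · rw [FA x hx, GA _ (g ⟨x, hx⟩).2]
      have : (⟨(g ⟨x, hx⟩ : X), (g ⟨x, hx⟩).2⟩ : A) = g ⟨x, hx⟩ := rfl
      rw [this, Homeomorph.symm_apply_apply]
    · rw [Fnot x hx]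
      have hnot : (h' ⟨x, hAcB hx⟩ : X) ∉ A := hpres h' hh1 hh2 _ hx
      rw [Gnot _ hnot]
      have : (⟨(h' ⟨x, hAcB hx⟩ : X), hAcB hnot⟩ : B) = h' ⟨x, hAcB hx⟩ := rfl
      rw [this, Homeomorph.symm_apply_apply]
  have hri : Function.RightInverse G F := by
    intro x
    by_cases hx : x ∈ A
    · rw [GA x hx, FA _ (g.symm ⟨x, hx⟩).2]
      have : (⟨(g.symm ⟨x, hx⟩ : X), (g.symm ⟨x, hx⟩).2⟩ : A) = g.symm ⟨x, hx⟩ := rfl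
      rw [this, Homeomorph.apply_symm_apply]
    · rw [Gnot x hx]
      have hnot : (h'.symm ⟨x, hAcB hx⟩ : X) ∉ A := hpres h'.symm hh1' hh2' _ hx
      rw [Fnot _ hnot]
      have : (⟨(h'.symm ⟨x, hAcB hx⟩ : X), hAcB hnot⟩ : B) = h'.symm ⟨x, hAcB hx⟩ := rfl
      rw [this, Homeomorph.apply_symm_apply]
  have hgEcont : ContinuousOn gE A := by
    rw [continuousOn_iff_continuous_restrict]
    have : A.domRestrict gE = fun a : A => (g a : X) := by
      funext a; simp only [domRestrict, hgE, dif_pos a.2]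
    rw [this]
    exact continuous_subtype_val.comp g.continuous
  have hhEcont : ContinuousOn hE B := by
    rw [continuousOn_iff_continuous_restrict]
    have : B.domRestrict hE = fun b : B => (h' b : X) := by
      funext b; simp only [domRestrict, hhE, dif_pos b.2]
    rw [this]
    exact continuous_subtype_val.comp h'.continuous
  have hfr : frontier A ⊆ A ∩ B := by
    rw [frontier_eq_closure_inter_closure, hA.closure_eq, ← hBc]
  have hFcont : Continuous F := by
    rw [hF]
    refine continuous_if ?_ ?_ ?_
    · intro a ha
      have hapq : a ∈ ({p, q} : Set X) := hABpq (hfr ha)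
      have haA : a ∈ A := (hfr ha).1
      have haB : a ∈ B := (hfr ha).2
      rcases hapq with e | e
      · subst e
        rw [show gE a = (g ⟨a, haA⟩ : X) from dif_pos haA,
          show hE a = (h' ⟨a, haB⟩ : X) from dif_pos haB, hg1, hh1]
      · subst e
        rw [show gE a = (g ⟨a, haA⟩ : X) from dif_pos haA,
          show hE a = (h' ⟨a, haB⟩ : X) from dif_pos haB, hg2, hh2]
    · have : closure {x : X | x ∈ A} = A := hA.closure_eq
      rw [this]; exact hgEcont
    · have : closure {x : X | ¬ x ∈ A} = B := by rw [← hBc.symm]; rfl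
      rw [this]; exact hhEcont
  let E : X ≃ X := ⟨F, G, hli, hri⟩
  have hEcont : Continuous E := hFcont
  refine ⟨hEcont.homeoOfEquivCompactToT2, fun x => ?_, fun x => ?_⟩
  · show F (x : X) = (g x : X)
    rw [FA _ x.2]
  · show F (x : X) = (h' x : X)
    by_cases hx : (x : X) ∈ A
    · rw [FA _ hx]
      have hxpq : (x : X) ∈ ({p, q} : Set X) := hABpq ⟨hx, x.2⟩
      rcases hxpq with e | e
      · have hxp : x = ⟨p, hpB⟩ := Subtype.ext e
        subst hxp
        have : (⟨p, hx⟩ : A) = ⟨p, hp⟩ := rfl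
        rw [this, hg1, hh1]
      · have hxq : x = ⟨q, hqB⟩ := Subtype.ext e
        subst hxq
        have : (⟨q, hx⟩ : A) = ⟨q, hq⟩ := rfl
        rw [this, hg2, hh2]
    · rw [Fnot _ hx]

/-- in the setting of the arc decomposition (an invariant compact arc `A` with
endpoints `p, q` fixed by every homeomorphism of `X`, whose interior is a free arc), the
restriction map `φ : f ↦ (f|_A, f|_B)`, with `B = cl(X \ A)`, is a bijection from `H(X)`
onto `H⁺(A) × H_B` (the pairs of homeomorphisms of `A` and of `B` fixing the endpoints),
and `φ` and its inverse are continuous for the `C⁰` distances (with the product of the two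
`C⁰` distances on the target). -/
theorem stmt_12 {X : Type*} [MetricSpace X] [CompactSpace X]
    (A : Set X) (p q : X) (B : Set X) (hB : B = closure Aᶜ)
    (hp : p ∈ A) (hq : q ∈ A) (hpB : p ∈ B) (hqB : q ∈ B)
    (harc : ∃ e : unitInterval ≃ₜ A, ((e 0 : X) = p ∧ (e 1 : X) = q))
    (hfree : IsOpen (A \ {p, q}) ∧ Nonempty (ℝ ≃ₜ ↥(A \ {p, q})))
    (hinv : ∀ f : X ≃ₜ X, (∀ x : X, x ∈ A ↔ f x ∈ A) ∧ f p = p ∧ f q = q) :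
    ∃ φ : (X ≃ₜ X) → (A ≃ₜ A) × (B ≃ₜ B),
      (∀ f : X ≃ₜ X, ∀ x : A, ((φ f).1 x : X) = f x) ∧
      (∀ f : X ≃ₜ X, ∀ x : B, ((φ f).2 x : X) = f x) ∧
      Function.Injective φ ∧
      Set.range φ = {gh : (A ≃ₜ A) × (B ≃ₜ B) |
        (gh.1 ⟨p, hp⟩ : X) = p ∧ (gh.1 ⟨q, hq⟩ : X) = q ∧
        (gh.2 ⟨p, hpB⟩ : X) = p ∧ (gh.2 ⟨q, hqB⟩ : X) = q} ∧
      (∀ f : X ≃ₜ X, ∀ ε : ℝ, 0 < ε → ∃ δ : ℝ, 0 < δ ∧ ∀ g : X ≃ₜ X,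
        dC0H f g < δ → max (dC0H (φ f).1 (φ g).1) (dC0H (φ f).2 (φ g).2) < ε) ∧
      (∀ f : X ≃ₜ X, ∀ ε : ℝ, 0 < ε → ∃ δ : ℝ, 0 < δ ∧ ∀ g : X ≃ₜ X,
        max (dC0H (φ f).1 (φ g).1) (dC0H (φ f).2 (φ g).2) < δ → dC0H f g < ε) := by
  classical
  obtain ⟨e, hep, heq⟩ := harc
  haveI : Nonempty X := ⟨p⟩
  haveI : Nonempty A := ⟨⟨p, hp⟩⟩
  haveI : Nonempty B := ⟨⟨p, hpB⟩⟩
  haveI hcompA : CompactSpace A := e.compactSpace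
  have hAclosed : IsClosed A := (isCompact_iff_compactSpace.mpr hcompA).isClosed
  have hBclosed : IsClosed B := hB ▸ isClosed_closure
  haveI : CompactSpace B := isCompact_iff_compactSpace.mp hBclosed.isCompact
  have hAcB : Aᶜ ⊆ B := hB ▸ subset_closure
  have hcov : ∀ x : X, x ∈ A ∨ x ∈ B := fun x => (em (x ∈ A)).imp id fun h => hAcB h
  have hABpq : A ∩ B ⊆ {p, q} := by
    rintro x ⟨hxA, hxB⟩
    by_contra hx
    have hxo : x ∈ A \ {p, q} := ⟨hxA, hx⟩
    rw [hB] at hxB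
    obtain ⟨y, hy⟩ := mem_closure_iff.mp hxB _ hfree.1 hxo
    exact hy.2 hy.1.1
  have imgA : ∀ f : X ≃ₜ X, f '' A = A := by
    intro f; ext y; constructor
    · rintro ⟨x, hx, rfl⟩; exact ((hinv f).1 x).mp hx
    · intro hy
      exact ⟨f.symm y, ((hinv f).1 (f.symm y)).mpr (by rwa [f.apply_symm_apply]),
        f.apply_symm_apply y⟩
  have imgB : ∀ f : X ≃ₜ X, f '' B = B := by
    intro f
    have hc : f '' Aᶜ = Aᶜ := by
      ext y; constructor
      · rintro ⟨x, hx, rfl⟩; exact fun h => hx (((hinv f).1 x).mpr h)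
      · intro hy
        refine ⟨f.symm y, fun h => hy ?_, f.apply_symm_apply y⟩
        have := ((hinv f).1 (f.symm y)).mp h
        rwa [f.apply_symm_apply] at this
    rw [hB, f.image_closure, hc]
  refine ⟨fun f => (hrestrict f A (imgA f), hrestrict f B (imgB f)),
    fun f x => hrestrict_coe f A (imgA f) x,
    fun f x => hrestrict_coe f B (imgB f) x, ?_, ?_, ?_, ?_⟩
  · -- injectivity
    intro f g h
    have h1 : hrestrict f A (imgA f) = hrestrict g A (imgA g) := congrArg Prod.fst h
    have h2 : hrestrict f B (imgB f) = hrestrict g B (imgB g) := congrArg Prod.snd h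
    ext x
    rcases hcov x with hx | hx
    · calc f x = (hrestrict f A (imgA f) ⟨x, hx⟩ : X) := rfl
        _ = (hrestrict g A (imgA g) ⟨x, hx⟩ : X) := by rw [h1]
        _ = g x := rfl
    · calc f x = (hrestrict f B (imgB f) ⟨x, hx⟩ : X) := rfl
        _ = (hrestrict g B (imgB g) ⟨x, hx⟩ : X) := by rw [h2]
        _ = g x := rfl
  · -- range
    ext gh
    constructor
    · rintro ⟨f, rfl⟩
      exact ⟨by rw [hrestrict_coe]; exact (hinv f).2.1,
        by rw [hrestrict_coe]; exact (hinv f).2.2,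
        by rw [hrestrict_coe]; exact (hinv f).2.1,
        by rw [hrestrict_coe]; exact (hinv f).2.2⟩
    · rintro ⟨hg1, hg2, hh1, hh2⟩
      obtain ⟨F, hFA, hFB⟩ := glue_homeo hAclosed hB hp hq hpB hqB hABpq
        gh.1 gh.2 hg1 hg2 hh1 hh2
      refine ⟨F, ?_⟩
      have e1 : hrestrict F A (imgA F) = gh.1 :=
        Homeomorph.ext fun x => Subtype.ext (by rw [hrestrict_coe]; exact hFA x)
      have e2 : hrestrict F B (imgB F) = gh.2 :=
        Homeomorph.ext fun x => Subtype.ext (by rw [hrestrict_coe]; exact hFB x)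
      show (hrestrict F A (imgA F), hrestrict F B (imgB F)) = gh
      rw [e1, e2]
  · -- continuity of φ
    intro f ε hε
    refine ⟨ε, hε, fun g hg => lt_of_le_of_lt ?_ hg⟩
    exact max_le
      (dC0H_restrict_le f g _ _ (hrestrict_coe f A _) (hrestrict_symm_coe f A _)
        (hrestrict_coe g A _) (hrestrict_symm_coe g A _))
      (dC0H_restrict_le f g _ _ (hrestrict_coe f B _) (hrestrict_symm_coe f B _)
        (hrestrict_coe g B _) (hrestrict_symm_coe g B _))
  · -- continuity of φ⁻¹
    intro f ε hε
    refine ⟨ε, hε, fun g hg => lt_of_le_of_lt ?_ hg⟩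
    exact dC0H_le_max hcov f g _ _ _ _
      (hrestrict_coe f A _) (hrestrict_symm_coe f A _)
      (hrestrict_coe g A _) (hrestrict_symm_coe g A _)
      (hrestrict_coe f B _) (hrestrict_symm_coe f B _)
      (hrestrict_coe g B _) (hrestrict_symm_coe g B _)
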